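/- The function F ↦ ‖F·Fᵀ‖² on real 3×3 matrices is strictly convex; more precisely, it is twice differentiable and its second derivative in any direction H ≠ 0 satisfies ⟨D²_F(‖F Fᵀ‖²).H, H⟩ = 2‖F Hᵀ + H Fᵀ‖² + 4⟨F Fᵀ, H Hᵀ⟩ > 0 for every real 3×3 matrix F invertible with det F > 0 and every nonzero real 3×3 matrix H. -/

import Mathlib

open Matrix

noncomputable section

attribute [local instance] Matrix.frobeniusNormedAddCommGroup Matrix.frobeniusNormedSpace

/-- Frobenius inner product of two real 3×3 matrices: `⟨X, Y⟩ = tr (X Yᵀ)`. -/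
def finner (X Y : Matrix (Fin 3) (Fin 3) ℝ) : ℝ :=
  (X * Yᵀ).trace

abbrev E3 := Matrix (Fin 3) (Fin 3) ℝ

/-! ### Trace identities, proved by brute-force expansion -/

lemma traceId1 (F H : E3) :
    ((F * Fᵀ) * (F * Hᵀ + H * Fᵀ)ᵀ).trace + ((F * Hᵀ + H * Fᵀ) * (F * Fᵀ)ᵀ).trace
      = 4 * (((F * Fᵀ * F) * Hᵀ).trace) := by
  simp only [Matrix.trace, Matrix.diag, Matrix.mul_apply, Matrix.transpose_apply,
    Matrix.add_apply, Fin.sum_univ_succ, Fin.sum_univ_zero]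
  ring

lemma traceId2 (F H : E3) :
    4 * ((((F * Fᵀ) * H + (F * Hᵀ + H * Fᵀ) * F) * Hᵀ).trace)
      = 2 * finner (F * Hᵀ + H * Fᵀ) (F * Hᵀ + H * Fᵀ) + 4 * finner (F * Fᵀ) (H * Hᵀ) := by
  simp only [finner, Matrix.trace, Matrix.diag, Matrix.mul_apply, Matrix.transpose_apply,
    Matrix.add_apply, Fin.sum_univ_succ, Fin.sum_univ_zero]
  ring

lemma traceId3 (F H : E3) :
    finner (F * Fᵀ) (H * Hᵀ) = finner (Hᵀ * F) (Hᵀ * F) := by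
  simp only [finner, Matrix.trace, Matrix.diag, Matrix.mul_apply, Matrix.transpose_apply,
    Fin.sum_univ_succ, Fin.sum_univ_zero]
  ring

lemma finner_eq_sum_sq (X : E3) : finner X X = ∑ i, ∑ j, (X i j) ^ 2 := by
  simp only [finner, Matrix.trace, Matrix.diag, Matrix.mul_apply, Matrix.transpose_apply]
  congr 1; funext i; congr 1; funext j; ring

lemma finner_self_nonneg (X : E3) : 0 ≤ finner X X := by
  rw [finner_eq_sum_sq]; positivity

lemma finner_self_pos (X : E3) (hX : X ≠ 0) : 0 < finner X X := by
  have hX' : ∃ i j, X i j ≠ 0 := by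
    by_contra h
    push_neg at h
    exact hX (by ext i j; simp [h])
  obtain ⟨i, j, hij⟩ := hX'
  rw [finner_eq_sum_sq]
  have h1 : 0 < ∑ j', (X i j') ^ 2 :=
    Finset.sum_pos' (fun _ _ => sq_nonneg _) ⟨j, Finset.mem_univ j, by positivity⟩
  exact Finset.sum_pos' (fun _ _ => Finset.sum_nonneg fun _ _ => sq_nonneg _)
    ⟨i, Finset.mem_univ i, h1⟩

/-! ### Continuous (bi)linear maps -/

def tCLM : E3 →L[ℝ] E3 :=
  LinearMap.toContinuousLinearMap (Matrix.transposeLinearEquiv (Fin 3) (Fin 3) ℝ ℝ).toLinearMap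

def trCLM : E3 →L[ℝ] ℝ :=
  LinearMap.toContinuousLinearMap (Matrix.traceLinearMap (Fin 3) ℝ ℝ)

/-- matrix multiplication as a continuous bilinear map -/
def MM : E3 →L[ℝ] E3 →L[ℝ] E3 :=
  LinearMap.toContinuousLinearMap
    { toFun := fun X => LinearMap.toContinuousLinearMap (LinearMap.mulLeft ℝ X)
      map_add' := by intro X Y; ext Z; simp [Matrix.add_mul]
      map_smul' := by intro c X; ext Z; simp [Matrix.smul_mul] }

/-- `(X, Y) ↦ X * Yᵀ` as a continuous bilinear map -/
def bb : E3 →L[ℝ] E3 →L[ℝ] E3 :=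
  ((ContinuousLinearMap.compL ℝ E3 E3 E3).flip tCLM).comp MM

/-- `(X, Y) ↦ finner X Y` as a continuous bilinear map -/
def PP : E3 →L[ℝ] E3 →L[ℝ] ℝ :=
  ((ContinuousLinearMap.compL ℝ E3 E3 ℝ) trCLM).comp bb

@[simp] lemma MM_apply (X Y : E3) : MM X Y = X * Y := rfl
@[simp] lemma bb_apply (X Y : E3) : bb X Y = X * Yᵀ := rfl
@[simp] lemma PP_apply (X Y : E3) : PP X Y = (X * Yᵀ).trace := rfl

/-! ### Derivatives -/

/-- the derivative of `F ↦ F * Fᵀ` -/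
def qd (F : E3) : E3 →L[ℝ] E3 :=
  bb.precompR E3 F (ContinuousLinearMap.id ℝ E3) +
    bb.precompL E3 (ContinuousLinearMap.id ℝ E3) F

@[simp] lemma qd_apply (F H : E3) : qd F H = F * Hᵀ + H * Fᵀ := rfl

lemma hq (F : E3) : HasFDerivAt (fun F : E3 => bb F F) (qd F) F :=
  bb.hasFDerivAt_of_bilinear (hasFDerivAt_id F) (hasFDerivAt_id F)

lemma hf (F : E3) :
    HasFDerivAt (fun F : E3 => PP (bb F F) (bb F F))
      (PP.precompR E3 (bb F F) (qd F) + PP.precompL E3 (qd F) (bb F F)) F :=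
  PP.hasFDerivAt_of_bilinear (hq F) (hq F)

lemma fderiv_f_eq :
    (fderiv ℝ (fun F : E3 => PP (bb F F) (bb F F))) =
      fun F => (4 : ℝ) • PP (F * Fᵀ * F) := by
  funext F
  refine (hf F).fderiv.trans ?_
  ext H
  simp only [ContinuousLinearMap.add_apply, ContinuousLinearMap.precompR_apply,
    ContinuousLinearMap.precompL_apply, ContinuousLinearMap.smul_apply, qd_apply, bb_apply,
    PP_apply, ContinuousLinearMap.coe_id', id_eq, smul_eq_mul]
  exact traceId1 F H

/-- derivative of the cubic map `F ↦ (F * Fᵀ) * F` -/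
def cd (F : E3) : E3 →L[ℝ] E3 :=
  MM.precompR E3 (bb F F) (ContinuousLinearMap.id ℝ E3) + MM.precompL E3 (qd F) F

@[simp] lemma cd_apply (F H : E3) : cd F H = F * Fᵀ * H + (F * Hᵀ + H * Fᵀ) * F := rfl

lemma hc (F : E3) : HasFDerivAt (fun F : E3 => MM (bb F F) F) (cd F) F :=
  MM.hasFDerivAt_of_bilinear (hq F) (hasFDerivAt_id F)

section
def nclm : NormedAddCommGroup (E3 →L[ℝ] ℝ) := ContinuousLinearMap.toNormedAddCommGroup
attribute [local instance] nclm
def sclm : NormedSpace ℝ (E3 →L[ℝ] ℝ) := ContinuousLinearMap.toNormedSpace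
attribute [local instance] sclm
lemma hf2 (F : E3) :
    HasFDerivAt (fun F : E3 => (4 : ℝ) • PP (F * Fᵀ * F))
      (((4 : ℝ) • PP).comp (cd F)) F := by
  have h : HasFDerivAt (fun F : E3 => ((4 : ℝ) • PP) (MM (bb F F) F))
      (((4 : ℝ) • PP).comp (cd F)) F :=
    ((4 : ℝ) • PP).hasFDerivAt.comp F (hc F)
  exact h
end

lemma contDiff_q : ContDiff ℝ 2 (fun F : E3 => bb F F) :=
  ContDiff.comp (n := 2) (𝕜 := ℝ) (g := fun p : E3 × E3 => bb p.1 p.2)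
    (f := fun F : E3 => (F, F)) bb.isBoundedBilinearMap.contDiff (contDiff_id.prodMk contDiff_id)

lemma contDiff_f : ContDiff ℝ 2 (fun F : E3 => PP (bb F F) (bb F F)) :=
  ContDiff.comp (n := 2) (𝕜 := ℝ) (g := fun p : E3 × E3 => PP p.1 p.2)
    (f := fun F : E3 => (bb F F, bb F F)) PP.isBoundedBilinearMap.contDiff
    (contDiff_q.prodMk contDiff_q)

theorem stmt_2 :
    ContDiff ℝ 2 (fun F : Matrix (Fin 3) (Fin 3) ℝ => finner (F * Fᵀ) (F * Fᵀ)) ∧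
    ∀ F H : Matrix (Fin 3) (Fin 3) ℝ, 0 < F.det → H ≠ 0 →
      iteratedFDeriv ℝ 2 (fun F : Matrix (Fin 3) (Fin 3) ℝ => finner (F * Fᵀ) (F * Fᵀ)) F
          ![H, H] =
        2 * finner (F * Hᵀ + H * Fᵀ) (F * Hᵀ + H * Fᵀ) + 4 * finner (F * Fᵀ) (H * Hᵀ) ∧
      0 < 2 * finner (F * Hᵀ + H * Fᵀ) (F * Hᵀ + H * Fᵀ) + 4 * finner (F * Fᵀ) (H * Hᵀ) := by
  have hfun : (fun F : Matrix (Fin 3) (Fin 3) ℝ => finner (F * Fᵀ) (F * Fᵀ)) =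
      fun F : E3 => PP (bb F F) (bb F F) := by
    funext F; simp [finner]
  constructor
  · rw [hfun]; exact contDiff_f
  · intro F H hdet hH
    constructor
    · rw [hfun, iteratedFDeriv_two_apply]
      erw [fderiv_f_eq]
      have h2 : fderiv ℝ (fun F : E3 => (4 : ℝ) • PP (F * Fᵀ * F)) F =
          ((4 : ℝ) • PP).comp (cd F) := (hf2 F).fderiv
      erw [h2]
      simp only [Matrix.cons_val_zero, Matrix.cons_val_one, Matrix.head_cons,
        ContinuousLinearMap.comp_apply, ContinuousLinearMap.smul_apply, cd_apply,
        PP_apply, smul_eq_mul]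
      exact traceId2 F H
    · have h1 : 0 ≤ finner (F * Hᵀ + H * Fᵀ) (F * Hᵀ + H * Fᵀ) := finner_self_nonneg _
      have hHF : Hᵀ * F ≠ 0 := by
        intro h0
        have hu : IsUnit F.det := hdet.ne'.isUnit
        have hT : Hᵀ = 0 := by
          have h3 := congrArg (fun M => M * F⁻¹) h0
          simpa [Matrix.mul_assoc, Matrix.mul_nonsing_inv F hu] using h3
        exact hH (by simpa using congrArg Matrix.transpose hT)
      have h2 : 0 < finner (F * Fᵀ) (H * Hᵀ) := by
        rw [traceId3 F H]
        exact finner_self_pos _ hHF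
      linarith
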